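/- Let b ≥ 2 be an integer with prime factorization b = p₁^{a₁} p₂^{a₂} ⋯ p_r^{a_r} with r ≥ 2 distinct primes, ordered so that a₁(p₁−1) > a_i(p_i−1) for all i ≥ 2, and let b' = b / p₁^{a₁}. Then for all sufficiently large n, b' divides ℓ_b(n!); in particular ℓ_b(n!) ∈ {b', 2b', …, (p₁^{a₁}−1)·b'} for all sufficiently large n. -/

import Mathlib

/-- The state reached after feeding the base-`k` digits of `n`
(most significant digit first, empty string for `n = 0`) into the
transition function `ρ` starting from state `q₀`. -/
def autoRun {Q : Type} (k : ℕ) (ρ : Q → Fin k → Q) (q₀ : Q) (n : ℕ) : Q :=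
  (Nat.digits k n).reverse.foldl (fun q d => if h : d < k then ρ q ⟨d, h⟩ else q) q₀

/-- A sequence `a : ℕ → Δ` is `k`-automatic: some DFAO over the alphabet
`{0, …, k-1}` computes `a n` from the base-`k` digits of `n`
(most significant digit first). -/
def IsAutomatic {Δ : Type*} (k : ℕ) (a : ℕ → Δ) : Prop :=
  ∃ (Q : Type) (_ : Finite Q) (ρ : Q → Fin k → Q) (q₀ : Q) (τ : Q → Δ),
    ∀ n : ℕ, a n = τ (autoRun k ρ q₀ n)

/-- `lnz b n` is the last nonzero digit of `n` in base `b`: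
`(n / b ^ v_b(n)) % b`, where `v_b(n) = padicValNat b n` is the largest `t`
with `b ^ t ∣ n`. -/
def lnz (b n : ℕ) : ℕ := (n / b ^ padicValNat b n) % b

/-- `digSum b n` is the sum of the digits of `n` written in base `b`. -/
def digSum (b n : ℕ) : ℕ := (Nat.digits b n).sum

lemma my_pow_succ_not_dvd {b m : ℕ} (hb : 2 ≤ b) (hm : m ≠ 0) :
    ¬ b ^ (padicValNat b m + 1) ∣ m := by
  have hfin : FiniteMultiplicity b m :=
    Nat.finiteMultiplicity_iff.2 ⟨by omega, Nat.pos_of_ne_zero hm⟩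
  rw [padicValNat_def' (by omega) hm]
  exact hfin.not_pow_dvd_of_multiplicity_lt (Nat.lt_succ_self _)

lemma my_prod_dvd {ι : Type*} [DecidableEq ι] {s : Finset ι} {f : ι → ℕ} {z : ℕ}
    (hc : ∀ i ∈ s, ∀ j ∈ s, i ≠ j → Nat.Coprime (f i) (f j))
    (hd : ∀ i ∈ s, f i ∣ z) : (∏ i ∈ s, f i) ∣ z := by
  induction s using Finset.induction_on with
  | empty => simpa using one_dvd z
  | @insert a t hnotmem ih =>
    rw [Finset.prod_insert hnotmem]
    refine Nat.Coprime.mul_dvd_of_dvd_of_dvd ?_ (hd a (Finset.mem_insert_self a t)) ?_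
    · exact Nat.Coprime.prod_right fun j hj =>
        hc a (Finset.mem_insert_self a t) j (Finset.mem_insert_of_mem hj)
          (fun h => hnotmem (h ▸ hj))
    · exact ih (fun i hi j hj hij => hc i (Finset.mem_insert_of_mem hi) j
        (Finset.mem_insert_of_mem hj) hij)
        (fun i hi => hd i (Finset.mem_insert_of_mem hi))

lemma my_two_pow_bound (c k : ℕ) : c * (2 * c + 2 + k + 1) ≤ 2 ^ (2 * c + 2 + k) := by
  have e1 : 2 * c + 2 ≤ 2 ^ (c + 1) := by
    have := Nat.lt_two_pow_self (n := c)
    rw [pow_succ]; omega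
  have e2 : c + 2 + k ≤ 2 ^ (c + 1 + k) := by
    have := Nat.lt_two_pow_self (n := c + 1 + k); omega
  calc c * (2 * c + 2 + k + 1) ≤ (2 * c + 2) * (c + 2 + k) := by nlinarith
    _ ≤ 2 ^ (c + 1) * 2 ^ (c + 1 + k) := Nat.mul_le_mul e1 e2
    _ = 2 ^ (2 * c + 2 + k) := by rw [← pow_add]; ring_nf

lemma my_log_bound (c : ℕ) : ∃ N : ℕ, 1 ≤ N ∧ ∀ n : ℕ, N ≤ n → c * (Nat.log 2 n + 1) ≤ n := by
  refine ⟨2 ^ (2 * c + 2), Nat.one_le_two_pow, fun n hn => ?_⟩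
  have hn0 : n ≠ 0 := by
    have : (0:ℕ) < 2 ^ (2*c+2) := by positivity
    omega
  have hL : 2 * c + 2 ≤ Nat.log 2 n := (Nat.le_log_iff_pow_le one_lt_two hn0).2 hn
  obtain ⟨k, hk⟩ : ∃ k, Nat.log 2 n = 2 * c + 2 + k := ⟨Nat.log 2 n - (2*c+2), by omega⟩
  calc c * (Nat.log 2 n + 1) = c * (2*c+2+k+1) := by rw [hk]
    _ ≤ 2 ^ (2*c+2+k) := my_two_pow_bound c k
    _ = 2 ^ Nat.log 2 n := by rw [hk]
    _ ≤ n := Nat.pow_log_le_self 2 hn0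

lemma my_digit_sum_bound {p n : ℕ} (hp : 2 ≤ p) (hn : n ≠ 0) :
    (Nat.digits p n).sum ≤ (p - 1) * (Nat.log 2 n + 1) := by
  have h1 : (Nat.digits p n).sum ≤ (Nat.digits p n).length * (p - 1) := by
    simpa [smul_eq_mul] using List.sum_le_card_nsmul (Nat.digits p n) (p - 1)
      (fun x hx => by have := Nat.digits_lt_base (by omega) hx; omega)
  rw [Nat.digits_len p n (by omega) hn] at h1
  have h2 : Nat.log p n ≤ Nat.log 2 n := Nat.log_anti_left one_lt_two hp
  calc (Nat.digits p n).sum ≤ (Nat.log p n + 1) * (p-1) := h1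
    _ ≤ (Nat.log 2 n + 1) * (p-1) := Nat.mul_le_mul_right _ (by omega)
    _ = (p-1) * (Nat.log 2 n + 1) := mul_comm _ _


/-- Let `b = ∏ i, p i ^ a i` with `r ≥ 2` distinct primes, ordered so that
`a 0 * (p 0 - 1) > a i * (p i - 1)` for all `i ≠ 0`, and let
`b' = b / p 0 ^ a 0`.  Then for all sufficiently large `n`, `b'` divides
`ℓ_b (n !)`; in particular `ℓ_b (n !) ∈ {b', 2 b', …, (p 0 ^ a 0 - 1) b'}`. -/
theorem lnz_factorial_divisible_of_strict_max (b r : ℕ) (hb : 2 ≤ b) (hr : 2 ≤ r)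
    (p a : Fin r → ℕ) (hp : ∀ i, (p i).Prime) (hpinj : Function.Injective p)
    (ha : ∀ i, 0 < a i) (hfac : b = ∏ i, p i ^ a i)
    (hmax : ∀ i : Fin r, i ≠ ⟨0, by omega⟩ →
      a i * (p i - 1) < a ⟨0, by omega⟩ * (p ⟨0, by omega⟩ - 1))
    (b' : ℕ) (hb' : b' = b / p ⟨0, by omega⟩ ^ a ⟨0, by omega⟩) :
    ∃ N : ℕ, ∀ n : ℕ, N ≤ n →
      b' ∣ lnz b (Nat.factorial n) ∧
      ∃ j : ℕ, 1 ≤ j ∧ j ≤ p ⟨0, by omega⟩ ^ a ⟨0, by omega⟩ - 1 ∧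
        lnz b (Nat.factorial n) = j * b' := by
  have hr0 : 0 < r := by omega
  set i0 : Fin r := ⟨0, hr0⟩ with hi0
  -- value of padicValNat (p i) at b
  have hbne : ∀ j : Fin r, p j ^ a j ≠ 0 := fun j => pow_ne_zero _ (hp j).pos.ne'
  have hvb : ∀ i : Fin r, padicValNat (p i) b = a i := by
    intro i
    haveI := Fact.mk (hp i)
    have hnd : ¬ p i ∣ ∏ j ∈ Finset.univ.erase i, p j ^ a j := by
      intro hdvd
      obtain ⟨j, hj, hdj⟩ := (hp i).prime.exists_mem_finset_dvd hdvd
      have : p i = p j := (Nat.prime_dvd_prime_iff_eq (hp i) (hp j)).1 ((hp i).dvd_of_dvd_pow hdj)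
      exact (Finset.ne_of_mem_erase hj) (hpinj this.symm)
    have hprodne : (∏ j ∈ Finset.univ.erase i, p j ^ a j) ≠ 0 :=
      Finset.prod_ne_zero_iff.2 fun j _ => hbne j
    rw [hfac, ← Finset.mul_prod_erase _ _ (Finset.mem_univ i),
      padicValNat.mul (hbne i) hprodne, padicValNat.prime_pow,
      padicValNat.eq_zero_of_not_dvd hnd, add_zero]
  -- split b
  have hPApos : 0 < p i0 ^ a i0 := pow_pos (hp i0).pos _
  have hsplit : b = p i0 ^ a i0 * ∏ j ∈ Finset.univ.erase i0, p j ^ a j := by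
    rw [hfac]; exact (Finset.mul_prod_erase _ _ (Finset.mem_univ i0)).symm
  have hb'2 : b' = ∏ j ∈ Finset.univ.erase i0, p j ^ a j := by
    rw [hb', hsplit, Nat.mul_div_cancel_left _ hPApos]
  have hb'pos : 0 < b' := by
    rw [hb'2]; exact Finset.prod_pos fun j _ => pow_pos (hp j).pos _
  -- key eventual inequality
  have key : ∀ i : Fin r, ∃ Ni : ℕ, 1 ≤ Ni ∧ ∀ n : ℕ, Ni ≤ n → i ≠ i0 →
      a i * padicValNat (p i0) (n.factorial) + a i * a i0 ≤ a i0 * padicValNat (p i) (n.factorial) := by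
    intro i
    by_cases hi : i = i0
    · exact ⟨1, le_refl 1, fun n _ h => absurd hi h⟩
    have hq : 1 ≤ p i - 1 := by have := (hp i).two_le; omega
    have hQ : 1 ≤ p i0 - 1 := by have := (hp i0).two_le; omega
    set q := p i - 1 with hqdef
    set Q := p i0 - 1 with hQdef
    obtain ⟨N, hN1, hN⟩ := my_log_bound (a i0 * Q * q + a i * a i0 * Q * q)
    refine ⟨N, hN1, fun n hn _ => ?_⟩
    have hn0 : n ≠ 0 := by omega
    haveI := Fact.mk (hp i)
    haveI := Fact.mk (hp i0)
    set vii := padicValNat (p i) (n.factorial) with hviidef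
    set vi0 := padicValNat (p i0) (n.factorial) with hvi0def
    have hLgi : q * vii = n - (Nat.digits (p i) n).sum := sub_one_mul_padicValNat_factorial n
    have hLg0 : Q * vi0 = n - (Nat.digits (p i0) n).sum := sub_one_mul_padicValNat_factorial n
    set si := (Nat.digits (p i) n).sum with hsidef
    have f1 : n ≤ q * vii + si := by omega
    have f2 : Q * vi0 ≤ n := by omega
    have hs : si ≤ q * (Nat.log 2 n + 1) := my_digit_sum_bound (hp i).two_le hn0
    have f3 : a i0 * Q * si + a i * a i0 * Q * q ≤ n := by
      have g0 := hN n hn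
      have g1 : a i0 * Q * si ≤ a i0 * Q * (q * (Nat.log 2 n + 1)) :=
        Nat.mul_le_mul_left _ hs
      have g2 : a i * a i0 * Q * q ≤ a i * a i0 * Q * q * (Nat.log 2 n + 1) :=
        Nat.le_mul_of_pos_right _ (by omega)
      linarith [g0, g1, g2]
    have f4 : a i * q + 1 ≤ a i0 * Q := hmax i hi
    have h1 : a i * q * (Q * vi0) ≤ a i * q * n := Nat.mul_le_mul_left _ f2
    have h2 : a i0 * Q * n ≤ a i0 * Q * (q * vii + si) := Nat.mul_le_mul_left _ f1
    have h3 : (a i * q + 1) * n ≤ a i0 * Q * n := Nat.mul_le_mul_right _ f4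
    have hQq : 0 < Q * q := by positivity
    have hgoal : Q * q * (a i * vi0 + a i * a i0) ≤ Q * q * (a i0 * vii) := by
      linarith [h1, h2, h3, f3]
    exact Nat.le_of_mul_le_mul_left hgoal hQq
  choose Nf hNf1 hNf2 using key
  refine ⟨(Finset.univ.sup Nf) + 1, fun n hn => ?_⟩
  have hn1 : 1 ≤ n := by omega
  have hnf : n.factorial ≠ 0 := (Nat.factorial_pos n).ne'
  set v := padicValNat b (n.factorial) with hv
  have hdvd : b ^ v ∣ n.factorial := pow_padicValNat_dvd
  set m := n.factorial / b ^ v with hmdef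
  have hmul : b ^ v * m = n.factorial := Nat.mul_div_cancel' hdvd
  have hm0 : m ≠ 0 := by
    intro h; rw [h, mul_zero] at hmul; exact hnf hmul.symm
  have hbm : ¬ b ∣ m := by
    rintro ⟨k, hk⟩
    exact my_pow_succ_not_dvd hb hnf ⟨k, by rw [pow_succ, mul_assoc, ← hk, hmul]⟩
  have hlnz : lnz b (n.factorial) = m % b := rfl
  have hmod0 : m % b ≠ 0 := fun h => hbm (Nat.dvd_of_mod_eq_zero h)
  -- bound on v
  have hv0 : a i0 * v ≤ padicValNat (p i0) (n.factorial) := by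
    haveI := Fact.mk (hp i0)
    have hd : p i0 ^ (a i0 * v) ∣ n.factorial := by
      rw [pow_mul]
      exact dvd_trans (pow_dvd_pow_of_dvd ⟨_, hsplit⟩ v) hdvd
    exact (padicValNat_dvd_iff_le hnf).1 hd
  -- each other prime power divides m
  have hdm : ∀ i ∈ Finset.univ.erase i0, p i ^ a i ∣ m := by
    intro i hi
    have hine : i ≠ i0 := Finset.ne_of_mem_erase hi
    haveI := Fact.mk (hp i)
    have hnNf : Nf i ≤ n := le_trans (Finset.le_sup (Finset.mem_univ i)) (by omega)
    have hkey := hNf2 i n hnNf hine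
    have hstep : a i0 * (a i * (v + 1)) ≤ a i0 * padicValNat (p i) (n.factorial) := by
      have : a i * (a i0 * v) ≤ a i * padicValNat (p i0) (n.factorial) := Nat.mul_le_mul_left _ hv0
      calc a i0 * (a i * (v + 1)) = a i * (a i0 * v) + a i * a i0 := by ring
        _ ≤ a i * padicValNat (p i0) (n.factorial) + a i * a i0 := by omega
        _ ≤ a i0 * padicValNat (p i) (n.factorial) := hkey
    have hle : a i * (v + 1) ≤ padicValNat (p i) (n.factorial) :=
      Nat.le_of_mul_le_mul_left hstep (ha i0)
    have hdecomp : padicValNat (p i) (n.factorial) = v * a i + padicValNat (p i) m := by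
      rw [← hmul, padicValNat.mul (pow_ne_zero _ (by omega)) hm0,
        padicValNat.pow b v, hvb i]
    have hexp : a i * (v + 1) = v * a i + a i := by ring
    have : a i ≤ padicValNat (p i) m := by omega
    exact (padicValNat_dvd_iff_le hm0).2 this
  have hdmod : ∀ i ∈ Finset.univ.erase i0, p i ^ a i ∣ m % b := by
    intro i hi
    have hdb : p i ^ a i ∣ b := hfac ▸ Finset.dvd_prod_of_mem _ (Finset.mem_univ i)
    exact (Nat.dvd_mod_iff hdb).2 (hdm i hi)
  have hb'dvd : b' ∣ m % b := by
    rw [hb'2]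
    refine my_prod_dvd (fun i _ j _ hij => ?_) hdmod
    exact Nat.Coprime.pow _ _ ((Nat.coprime_primes (hp i) (hp j)).2 fun h => hij (hpinj h))
  refine ⟨hlnz ▸ hb'dvd, ?_⟩
  obtain ⟨j, hj⟩ := hb'dvd
  have hjpos : 1 ≤ j := by
    rcases Nat.eq_zero_or_pos j with h | h
    · exfalso; exact hmod0 (by rw [hj, h, mul_zero])
    · exact h
  have hlt : m % b < b := Nat.mod_lt _ (by omega)
  have hjlt : j < p i0 ^ a i0 := by
    by_contra hcon
    push_neg at hcon
    have : p i0 ^ a i0 * b' ≤ b' * j := by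
      calc p i0 ^ a i0 * b' ≤ j * b' := Nat.mul_le_mul_right _ hcon
        _ = b' * j := mul_comm _ _
    rw [← hj] at this
    have hbeq : b = p i0 ^ a i0 * b' := by rw [hb'2, hsplit]
    omega
  exact ⟨j, hjpos, by omega, by rw [hlnz, hj, mul_comm]⟩
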